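/- For c = 0 (both q and Q light-like), the integrals f_i(q,Q) = ∑_{j≠i} τ_i τ_j (J_j Q_j q_i − q_j J_i Q_i)²/(J_i² − J_j²) satisfy ∑_{i=1}^n J_i² f_i(q,Q) = −⟨q, JQ⟩². -/

import Mathlib

open Finset

theorem stmt6 (n : ℕ) (τ J : Fin n → ℝ)
    (hτ : ∀ i, τ i = 1 ∨ τ i = -1)
    (hJ : ∀ i j, i ≠ j → (J i)^2 ≠ (J j)^2)
    (q Q : Fin n → ℝ)
    (hq : ∑ i, τ i * q i * q i = 0)
    (hQ : ∑ i, τ i * Q i * Q i = 0) :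
    ∑ i, (J i)^2 *
      (∑ j ∈ Finset.univ.erase i,
        τ i * τ j * (J j * Q j * q i - q j * J i * Q i)^2 / ((J i)^2 - (J j)^2))
      = -(∑ i, τ i * q i * (J i * Q i))^2 := by
  set F : Fin n → Fin n → ℝ := fun i j =>
    (J i)^2 * (τ i * τ j * (J j * Q j * q i - q j * J i * Q i)^2 / ((J i)^2 - (J j)^2))
    with hF
  set g : Fin n → Fin n → ℝ := fun i j =>
    τ i * τ j * (J j * Q j * q i - q j * J i * Q i)^2 with hg
  set T : ℝ := ∑ i, τ i * q i * (J i * Q i) with hT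
  have hdiag : ∀ i : Fin n, F i i = 0 := by
    intro i
    have h0 : J i * Q i * q i - q i * J i * Q i = 0 := by ring
    simp [hF, h0]
  have hLHS : (∑ i, (J i)^2 * (∑ j ∈ Finset.univ.erase i,
        τ i * τ j * (J j * Q j * q i - q j * J i * Q i)^2 / ((J i)^2 - (J j)^2)))
      = ∑ i, ∑ j, F i j := by
    refine Finset.sum_congr rfl fun i _ => ?_
    rw [Finset.mul_sum]
    exact Finset.sum_erase _ (hdiag i)
  have pair : ∀ i j, F i j + F j i = g i j := by
    intro i j
    by_cases hij : i = j
    · subst hij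
      have h0 : J i * Q i * q i - q i * J i * Q i = 0 := by ring
      simp [hdiag, hg, h0]
    · have h1 : (J i)^2 - (J j)^2 ≠ 0 := sub_ne_zero.mpr (hJ i j hij)
      have h2 : (J j)^2 - (J i)^2 ≠ 0 :=
        sub_ne_zero.mpr (hJ j i fun h => hij h.symm)
      simp only [hF, hg]
      field_simp
      ring
  have hsymm : (∑ i, ∑ j, F i j) = ∑ i, ∑ j, F j i := Finset.sum_comm
  have hexpand : ∀ i j, g i j
      = (τ i * q i * q i) * (τ j * (J j * Q j)^2)
        + (τ j * q j * q j) * (τ i * (J i * Q i)^2)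
        - 2 * ((τ i * q i * (J i * Q i)) * (τ j * q j * (J j * Q j))) := by
    intro i j; simp only [hg]; ring
  have hg_inner : ∀ i : Fin n, (∑ j, g i j)
      = (τ i * q i * q i) * (∑ j, τ j * (J j * Q j)^2)
        - 2 * ((τ i * q i * (J i * Q i)) * T) := by
    intro i
    calc (∑ j, g i j)
        = ∑ j, ((τ i * q i * q i) * (τ j * (J j * Q j)^2)
            + (τ j * q j * q j) * (τ i * (J i * Q i)^2)
            - 2 * ((τ i * q i * (J i * Q i)) * (τ j * q j * (J j * Q j)))) :=
          Finset.sum_congr rfl fun j _ => hexpand i j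
      _ = (∑ j, (τ i * q i * q i) * (τ j * (J j * Q j)^2))
            + (∑ j, (τ j * q j * q j) * (τ i * (J i * Q i)^2))
            - ∑ j, 2 * ((τ i * q i * (J i * Q i)) * (τ j * q j * (J j * Q j))) := by
          rw [Finset.sum_sub_distrib, Finset.sum_add_distrib]
      _ = (τ i * q i * q i) * (∑ j, τ j * (J j * Q j)^2)
            + (∑ j, τ j * q j * q j) * (τ i * (J i * Q i)^2)
            - 2 * ((τ i * q i * (J i * Q i)) * ∑ j, τ j * q j * (J j * Q j)) := by
          rw [← Finset.mul_sum, ← Finset.sum_mul, ← Finset.mul_sum, ← Finset.mul_sum]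
      _ = (τ i * q i * q i) * (∑ j, τ j * (J j * Q j)^2)
            - 2 * ((τ i * q i * (J i * Q i)) * T) := by
          rw [hq, ← hT]; ring
  have hg_total : (∑ i, ∑ j, g i j) = -2 * T^2 := by
    calc (∑ i, ∑ j, g i j)
        = ∑ i, ((τ i * q i * q i) * (∑ j, τ j * (J j * Q j)^2)
            - 2 * ((τ i * q i * (J i * Q i)) * T)) :=
          Finset.sum_congr rfl fun i _ => hg_inner i
      _ = (∑ i, (τ i * q i * q i) * (∑ j, τ j * (J j * Q j)^2))
            - ∑ i, 2 * ((τ i * q i * (J i * Q i)) * T) := Finset.sum_sub_distrib _ _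
      _ = (∑ i, τ i * q i * q i) * (∑ j, τ j * (J j * Q j)^2)
            - 2 * ((∑ i, τ i * q i * (J i * Q i)) * T) := by
          rw [← Finset.sum_mul, ← Finset.mul_sum, ← Finset.sum_mul]
      _ = -2 * T^2 := by rw [hq, ← hT]; ring
  have htwo : (∑ i, ∑ j, F i j) * 2 = ∑ i, ∑ j, g i j := by
    calc (∑ i, ∑ j, F i j) * 2
        = (∑ i, ∑ j, F i j) + (∑ i, ∑ j, F j i) := by rw [← hsymm]; ring
      _ = ∑ i, ∑ j, (F i j + F j i) := by
          rw [← Finset.sum_add_distrib]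
          exact Finset.sum_congr rfl fun i _ => (Finset.sum_add_distrib).symm
      _ = ∑ i, ∑ j, g i j := Finset.sum_congr rfl fun i _ =>
            Finset.sum_congr rfl fun j _ => pair i j
  rw [hLHS]
  have := htwo.trans hg_total
  linarith [this]
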